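/- Let F(r) = E(r)⁻¹·E'(r) where E(r) = cosh(r)·I₂ + sinh(r)·[[a,b],[b,-a]] and a²+b² = λ² < 1. Then F(r) = (1 + (1-λ²)sinh²(r))⁻¹ · [[(1/2)sinh(2r)(1-λ²) + a, b], [b, (1/2)sinh(2r)(1-λ²) - a]]. In particular the trace of F(r) equals sinh(2r)(1-λ²)/(1 + (1-λ²)sinh²(r)). -/

import Mathlib

theorem stmt_4 (a b r : ℝ) (hlt : a ^ 2 + b ^ 2 < 1)
    (E E' F : Matrix (Fin 2) (Fin 2) ℝ)
    (hE : E = Real.cosh r • (1 : Matrix (Fin 2) (Fin 2) ℝ)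
      + Real.sinh r • (!![a, b; b, -a] : Matrix (Fin 2) (Fin 2) ℝ))
    (hE' : E' = Real.sinh r • (1 : Matrix (Fin 2) (Fin 2) ℝ)
      + Real.cosh r • (!![a, b; b, -a] : Matrix (Fin 2) (Fin 2) ℝ))
    (hF : F = E⁻¹ * E') :
    F = (1 + (1 - (a ^ 2 + b ^ 2)) * Real.sinh r ^ 2)⁻¹ •
        (!![(1 / 2) * Real.sinh (2 * r) * (1 - (a ^ 2 + b ^ 2)) + a, b;
            b, (1 / 2) * Real.sinh (2 * r) * (1 - (a ^ 2 + b ^ 2)) - a]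
          : Matrix (Fin 2) (Fin 2) ℝ) ∧
    F.trace = Real.sinh (2 * r) * (1 - (a ^ 2 + b ^ 2))
      / (1 + (1 - (a ^ 2 + b ^ 2)) * Real.sinh r ^ 2) := by
  have hcosh := Real.cosh_sq r
  have hs2 := Real.sinh_two_mul r
  have hdpos : 0 < 1 + (1 - (a ^ 2 + b ^ 2)) * Real.sinh r ^ 2 := by
    nlinarith [sq_nonneg (Real.sinh r)]
  have hdet : E.det = 1 + (1 - (a ^ 2 + b ^ 2)) * Real.sinh r ^ 2 := by
    subst hE
    simp [Matrix.det_fin_two, Matrix.add_apply, Matrix.smul_apply, Matrix.one_apply]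
    nlinarith
  have hdet0 : E.det ≠ 0 := by rw [hdet]; exact ne_of_gt hdpos
  have hinv : E⁻¹ = E.det⁻¹ • E.adjugate := by
    rw [Matrix.inv_def, Ring.inverse_eq_inv']
  have h1 : F = (1 + (1 - (a ^ 2 + b ^ 2)) * Real.sinh r ^ 2)⁻¹ •
        (!![(1 / 2) * Real.sinh (2 * r) * (1 - (a ^ 2 + b ^ 2)) + a, b;
            b, (1 / 2) * Real.sinh (2 * r) * (1 - (a ^ 2 + b ^ 2)) - a]
          : Matrix (Fin 2) (Fin 2) ℝ) := by
    rw [hF, hinv, hdet]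
    subst hE hE'
    ext i j
    fin_cases i <;> fin_cases j <;>
      simp [Matrix.adjugate_fin_two, Matrix.mul_apply, Fin.sum_univ_two,
        Matrix.add_apply, Matrix.smul_apply, Matrix.one_apply] <;>
      field_simp
    · linear_combination (2*a) * hcosh
        - (1 - (a^2+b^2)) * hs2
    · linear_combination b * hcosh
    · linear_combination b * hcosh
    · linear_combination (-2*a) * hcosh
        - (1 - (a^2+b^2)) * hs2
  refine ⟨h1, ?_⟩
  rw [h1]
  simp [Matrix.trace_fin_two, Matrix.smul_apply]
  field_simp
  ring
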